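/- Let H be a bialgebra over a field K and C a left H-module coalgebra. If E is a finite-dimensional subcoalgebra of C, then D = H·E (the left H-submodule generated by E) is simultaneously an H-submodule and a subcoalgebra of C, and D is finitely generated as a left H-module. Consequently, every finite subset of C is contained in an H-submodule subcoalgebra of C that is finitely generated as a left H-module. -/

import Mathlib

open TensorProduct LinearMap

/-- `D` is a subcoalgebra of the `K`-coalgebra `C`. -/
def IsSubcoalgebra {K C : Type*} [CommSemiring K] [AddCommMonoid C] [Module K C]
    [Coalgebra K C] (D : Submodule K C) : Prop :=
  ∀ x ∈ D, Coalgebra.comul (R := K) x ∈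
    LinearMap.range (TensorProduct.map D.subtype D.subtype)

/-- The `H`-action on `C` as a `K`-linear map `H ⊗ C → C`. -/
noncomputable def actionMap (K H C : Type*) [CommSemiring K] [Semiring H] [Algebra K H]
    [AddCommMonoid C] [Module K C] [Module H C] [IsScalarTower K H C] [SMulCommClass K H C] :
    H ⊗[K] C →ₗ[K] C :=
  TensorProduct.lift (LinearMap.mk₂ K (· • ·) (fun h h' c => add_smul h h' c)
    (fun k h c => smul_assoc k h c) (fun h c c' => smul_add h c c')
    (fun k h c => (smul_comm k h c).symm))

set_option maxHeartbeats 1000000 in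
set_option linter.unusedSectionVars false

namespace ModCoalgAux

variable {K : Type*} [Field K] {C : Type*} [AddCommGroup C] [Module K C] [Coalgebra K C]

open Coalgebra Submodule

/-- Left contraction of a tensor against a functional. -/
noncomputable def lcontr (φ : C →ₗ[K] K) (M : Type*) [AddCommGroup M] [Module K M] :
    C ⊗[K] M →ₗ[K] M :=
  TensorProduct.lift ((LinearMap.lsmul K M).comp φ)

/-- Right contraction of a tensor against a functional. -/
noncomputable def rcontr (φ : C →ₗ[K] K) (M : Type*) [AddCommGroup M] [Module K M] :
    M ⊗[K] C →ₗ[K] M :=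
  TensorProduct.lift ((LinearMap.lsmul K M).comp φ).flip

@[simp] lemma lcontr_tmul (φ : C →ₗ[K] K) {M : Type*} [AddCommGroup M] [Module K M]
    (a : C) (m : M) : lcontr φ M (a ⊗ₜ[K] m) = φ a • m := rfl

@[simp] lemma rcontr_tmul (φ : C →ₗ[K] K) {M : Type*} [AddCommGroup M] [Module K M]
    (m : M) (a : C) : rcontr φ M (m ⊗ₜ[K] a) = φ a • m := rfl

lemma comul_lcontr (φ : C →ₗ[K] K) (t : C ⊗[K] C) :
    comul (R := K) (lcontr φ C t) = lcontr φ (C ⊗[K] C) ((LinearMap.lTensor C (comul (R := K))) t) := by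
  induction t using TensorProduct.induction_on with
  | zero => simp
  | tmul a c => simp
  | add t₁ t₂ h₁ h₂ => simp [h₁, h₂]

lemma comul_rcontr (φ : C →ₗ[K] K) (t : C ⊗[K] C) :
    comul (R := K) (rcontr φ C t) = rcontr φ (C ⊗[K] C) ((LinearMap.rTensor C (comul (R := K))) t) := by
  induction t using TensorProduct.induction_on with
  | zero => simp
  | tmul a c => simp
  | add t₁ t₂ h₁ h₂ => simp [h₁, h₂]

lemma lcontr_assoc (φ : C →ₗ[K] K) (s : (C ⊗[K] C) ⊗[K] C) :
    lcontr φ (C ⊗[K] C) ((TensorProduct.assoc K C C C) s) =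
      LinearMap.rTensor C (lcontr φ C) s := by
  have : (lcontr φ (C ⊗[K] C)) ∘ₗ (TensorProduct.assoc K C C C).toLinearMap =
      LinearMap.rTensor C (lcontr φ C) := by
    apply TensorProduct.ext_threefold
    intro x y z
    simp [smul_tmul']
  exact LinearMap.congr_fun this s

lemma rcontr_assoc_symm (φ : C →ₗ[K] K) (s : C ⊗[K] (C ⊗[K] C)) :
    rcontr φ (C ⊗[K] C) ((TensorProduct.assoc K C C C).symm s) =
      LinearMap.lTensor C (rcontr φ C) s := by
  induction s using TensorProduct.induction_on with
  | zero => simp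
  | tmul a u =>
    induction u using TensorProduct.induction_on with
    | zero => simp
    | tmul b c => simp [tmul_smul, smul_tmul']
    | add u₁ u₂ h₁ h₂ => simp only [tmul_add, map_add, h₁, h₂]
  | add s₁ s₂ h₁ h₂ => simp [h₁, h₂]

lemma lcontr_lTensor (φ : C →ₗ[K] K) {M M' : Type*} [AddCommGroup M] [Module K M]
    [AddCommGroup M'] [Module K M'] (f : M →ₗ[K] M') (t : C ⊗[K] M) :
    lcontr φ M' (LinearMap.lTensor C f t) = f (lcontr φ M t) := by
  induction t using TensorProduct.induction_on with
  | zero => simp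
  | tmul a m => simp
  | add t₁ t₂ h₁ h₂ => simp [h₁, h₂]

lemma rcontr_rTensor (φ : C →ₗ[K] K) {M M' : Type*} [AddCommGroup M] [Module K M]
    [AddCommGroup M'] [Module K M'] (f : M →ₗ[K] M') (t : M ⊗[K] C) :
    rcontr φ M' (LinearMap.rTensor C f t) = f (rcontr φ M t) := by
  induction t using TensorProduct.induction_on with
  | zero => simp
  | tmul m a => simp
  | add t₁ t₂ h₁ h₂ => simp [h₁, h₂]

variable {ι : Type*} (b : Module.Basis ι K C)

/-- The "right leg" coefficient operator. -/
noncomputable def Rm (i : ι) : C →ₗ[K] C := lcontr (b.coord i) C ∘ₗ comul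

/-- The "left leg" coefficient operator. -/
noncomputable def Lm (j : ι) : C →ₗ[K] C := rcontr (b.coord j) C ∘ₗ comul

@[simp] lemma Rm_apply (i : ι) (x : C) : Rm b i x = lcontr (b.coord i) C (comul x) := rfl
@[simp] lemma Lm_apply (j : ι) (x : C) : Lm b j x = rcontr (b.coord j) C (comul x) := rfl

lemma comul_Rm (i : ι) (x : C) :
    comul (R := K) (Rm b i x) = LinearMap.rTensor C (Rm b i) (comul x) := by
  rw [Rm_apply, comul_lcontr, ← Coalgebra.coassoc_apply, lcontr_assoc, ← LinearMap.comp_apply,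
    ← LinearMap.rTensor_comp]
  rfl

lemma comul_Lm (j : ι) (x : C) :
    comul (R := K) (Lm b j x) = LinearMap.lTensor C (Lm b j) (comul x) := by
  rw [Lm_apply, comul_rcontr, ← Coalgebra.coassoc_symm_apply, rcontr_assoc_symm,
    ← LinearMap.comp_apply, ← LinearMap.lTensor_comp]
  rfl

lemma Lm_Rm_comm (i j : ι) (x : C) : Lm b j (Rm b i x) = Rm b i (Lm b j x) := by
  rw [Lm_apply, comul_Rm, rcontr_rTensor]
  rfl

lemma repr_left (t : C ⊗[K] C) :
    ∃ T : Finset ι, (∀ i ∉ T, lcontr (b.coord i) C t = 0) ∧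
      ∑ i ∈ T, b i ⊗ₜ[K] lcontr (b.coord i) C t = t := by
  classical
  induction t using TensorProduct.induction_on with
  | zero => exact ⟨∅, by simp, by simp⟩
  | tmul a c =>
    refine ⟨(b.repr a).support, fun i hi => ?_, ?_⟩
    · simp only [lcontr_tmul, Module.Basis.coord_apply]
      rw [Finsupp.notMem_support_iff.mp hi, zero_smul]
    · have key : ∑ i ∈ (b.repr a).support, b.repr a i • b i = a := by
        conv_rhs => rw [← b.linearCombination_repr a]
        simp [Finsupp.linearCombination_apply, Finsupp.sum]
      calc ∑ i ∈ (b.repr a).support, b i ⊗ₜ[K] lcontr (b.coord i) C (a ⊗ₜ[K] c)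
          = ∑ i ∈ (b.repr a).support, (b.repr a i • b i) ⊗ₜ[K] c := by
            refine Finset.sum_congr rfl fun i _ => ?_
            simp [smul_tmul', tmul_smul, Module.Basis.coord_apply]
        _ = a ⊗ₜ[K] c := by rw [← sum_tmul, key]
  | add t₁ t₂ h₁ h₂ =>
    obtain ⟨T₁, hz₁, hs₁⟩ := h₁
    obtain ⟨T₂, hz₂, hs₂⟩ := h₂
    refine ⟨T₁ ∪ T₂, fun i hi => ?_, ?_⟩
    · rw [map_add, hz₁ i (fun h => hi (Finset.mem_union_left _ h)),
        hz₂ i (fun h => hi (Finset.mem_union_right _ h)), add_zero]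
    · have e₁ : ∑ i ∈ T₁ ∪ T₂, b i ⊗ₜ[K] lcontr (b.coord i) C t₁ = t₁ := by
        conv_rhs => rw [← hs₁]
        refine (Finset.sum_subset Finset.subset_union_left fun i _ hi => ?_).symm
        rw [hz₁ i hi, tmul_zero]
      have e₂ : ∑ i ∈ T₁ ∪ T₂, b i ⊗ₜ[K] lcontr (b.coord i) C t₂ = t₂ := by
        conv_rhs => rw [← hs₂]
        refine (Finset.sum_subset Finset.subset_union_right fun i _ hi => ?_).symm
        rw [hz₂ i hi, tmul_zero]
      calc ∑ i ∈ T₁ ∪ T₂, b i ⊗ₜ[K] lcontr (b.coord i) C (t₁ + t₂)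
          = ∑ i ∈ T₁ ∪ T₂, (b i ⊗ₜ[K] lcontr (b.coord i) C t₁
              + b i ⊗ₜ[K] lcontr (b.coord i) C t₂) := by
            refine Finset.sum_congr rfl fun i _ => ?_
            rw [map_add, tmul_add]
        _ = t₁ + t₂ := by rw [Finset.sum_add_distrib, e₁, e₂]

lemma repr_right (t : C ⊗[K] C) :
    ∃ T : Finset ι, (∀ j ∉ T, rcontr (b.coord j) C t = 0) ∧
      ∑ j ∈ T, (rcontr (b.coord j) C t) ⊗ₜ[K] b j = t := by
  classical
  induction t using TensorProduct.induction_on with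
  | zero => exact ⟨∅, by simp, by simp⟩
  | tmul c a =>
    refine ⟨(b.repr a).support, fun j hj => ?_, ?_⟩
    · simp only [rcontr_tmul, Module.Basis.coord_apply]
      rw [Finsupp.notMem_support_iff.mp hj, zero_smul]
    · have key : ∑ j ∈ (b.repr a).support, b.repr a j • b j = a := by
        conv_rhs => rw [← b.linearCombination_repr a]
        simp [Finsupp.linearCombination_apply, Finsupp.sum]
      calc ∑ j ∈ (b.repr a).support, (rcontr (b.coord j) C (c ⊗ₜ[K] a)) ⊗ₜ[K] b j
          = ∑ j ∈ (b.repr a).support, c ⊗ₜ[K] (b.repr a j • b j) := by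
            refine Finset.sum_congr rfl fun j _ => ?_
            simp [smul_tmul', tmul_smul, Module.Basis.coord_apply]
        _ = c ⊗ₜ[K] a := by rw [← tmul_sum, key]
  | add t₁ t₂ h₁ h₂ =>
    obtain ⟨T₁, hz₁, hs₁⟩ := h₁
    obtain ⟨T₂, hz₂, hs₂⟩ := h₂
    refine ⟨T₁ ∪ T₂, fun j hj => ?_, ?_⟩
    · rw [map_add, hz₁ j (fun h => hj (Finset.mem_union_left _ h)),
        hz₂ j (fun h => hj (Finset.mem_union_right _ h)), add_zero]
    · have e₁ : ∑ j ∈ T₁ ∪ T₂, (rcontr (b.coord j) C t₁) ⊗ₜ[K] b j = t₁ := by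
        conv_rhs => rw [← hs₁]
        refine (Finset.sum_subset Finset.subset_union_left fun j _ hj => ?_).symm
        rw [hz₁ j hj, zero_tmul]
      have e₂ : ∑ j ∈ T₁ ∪ T₂, (rcontr (b.coord j) C t₂) ⊗ₜ[K] b j = t₂ := by
        conv_rhs => rw [← hs₂]
        refine (Finset.sum_subset Finset.subset_union_right fun j _ hj => ?_).symm
        rw [hz₂ j hj, zero_tmul]
      calc ∑ j ∈ T₁ ∪ T₂, (rcontr (b.coord j) C (t₁ + t₂)) ⊗ₜ[K] b j
          = ∑ j ∈ T₁ ∪ T₂, ((rcontr (b.coord j) C t₁) ⊗ₜ[K] b j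
              + (rcontr (b.coord j) C t₂) ⊗ₜ[K] b j) := by
            refine Finset.sum_congr rfl fun j _ => ?_
            rw [map_add, add_tmul]
        _ = t₁ + t₂ := by rw [Finset.sum_add_distrib, e₁, e₂]

lemma range_map_subtype_mono {D₁ D₂ : Submodule K C} (h : D₁ ≤ D₂) :
    LinearMap.range (TensorProduct.map D₁.subtype D₁.subtype) ≤
      LinearMap.range (TensorProduct.map D₂.subtype D₂.subtype) := by
  rintro _ ⟨t, rfl⟩
  refine ⟨TensorProduct.map (Submodule.inclusion h) (Submodule.inclusion h) t, ?_⟩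
  rw [← LinearMap.comp_apply, ← TensorProduct.map_comp]
  congr 1 <;> ext x <;> rfl

lemma mem_range_map_of_mem_inter (D : Submodule K C) {t : C ⊗[K] C}
    (h1 : t ∈ LinearMap.range (LinearMap.lTensor C D.subtype))
    (h2 : t ∈ LinearMap.range (LinearMap.rTensor C D.subtype)) :
    t ∈ LinearMap.range (TensorProduct.map D.subtype D.subtype) := by
  obtain ⟨u, hu⟩ := h1
  obtain ⟨v, hv⟩ := h2
  obtain ⟨π, hπ⟩ := D.subtype.exists_leftInverse_of_injective D.ker_subtype
  refine ⟨LinearMap.lTensor D π v, ?_⟩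
  have h4 : ∀ w : D ⊗[K] C, TensorProduct.map D.subtype D.subtype (LinearMap.lTensor D π w) =
      LinearMap.lTensor C (D.subtype ∘ₗ π) (LinearMap.rTensor C D.subtype w) := by
    intro w
    induction w using TensorProduct.induction_on with
    | zero => simp
    | tmul d c => simp
    | add w₁ w₂ g₁ g₂ => simp [g₁, g₂]
  rw [h4 v, hv, ← hu, ← LinearMap.comp_apply, ← LinearMap.lTensor_comp]
  have : (D.subtype ∘ₗ π) ∘ₗ D.subtype = D.subtype := by
    rw [LinearMap.comp_assoc, hπ, LinearMap.comp_id]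
  rw [this]

/-- The fundamental theorem of coalgebras, single-element version. -/
theorem exists_fd_subcoalgebra (c : C) :
    ∃ E : Submodule K C, c ∈ E ∧ IsSubcoalgebra E ∧ FiniteDimensional K E := by
  classical
  let b : Module.Basis (Module.Basis.ofVectorSpaceIndex K C) K C := Module.Basis.ofVectorSpace K C
  set f : (Module.Basis.ofVectorSpaceIndex K C) × (Module.Basis.ofVectorSpaceIndex K C) → C :=
    fun p => Lm b p.2 (Rm b p.1 c) with hf
  set D : Submodule K C := Submodule.span K (Set.range f) with hD
  obtain ⟨T, hT0, hTsum⟩ := repr_left b (comul (R := K) c)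
  -- finite dimensionality
  choose T' hT'0 _hT'sum using fun i => repr_right b (comul (R := K) (Rm b i c))
  have hfin : (Set.range f).Finite := by
    have hsub : Set.range f ⊆
        insert (0 : C) (f '' ↑(T.biUnion fun i => (T' i).image fun j => (i, j))) := by
      rintro _ ⟨⟨i, j⟩, rfl⟩
      by_cases hi : i ∈ T
      · by_cases hj : j ∈ T' i
        · exact Set.mem_insert_iff.mpr (Or.inr ⟨(i, j), by
            simp only [Finset.coe_biUnion, Set.mem_iUnion, Finset.mem_coe, Finset.coe_image]
            exact ⟨i, hi, Set.mem_image_of_mem _ hj⟩, rfl⟩)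
        · have : f (i, j) = 0 := hT'0 i j hj
          rw [this]; exact Set.mem_insert _ _
      · have hz : Rm b i c = 0 := hT0 i hi
        have : f (i, j) = 0 := by
          show Lm b j (Rm b i c) = 0
          rw [hz, map_zero]
        rw [this]; exact Set.mem_insert _ _
    exact Set.Finite.subset (Set.Finite.insert 0 (Set.Finite.image f (Finset.finite_toSet _))) hsub
  have hFD : FiniteDimensional K D := FiniteDimensional.span_of_finite K hfin
  -- c ∈ D
  have hgen : ∀ i j, Lm b j (Rm b i c) ∈ D :=
    fun i j => Submodule.subset_span ⟨(i, j), rfl⟩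
  have step1 : ∀ y : C, (∀ j, Lm b j y ∈ D) → y ∈ D := by
    intro y hy
    obtain ⟨T₂, hz₂, hs₂⟩ := repr_right b (comul (R := K) y)
    have hy' : y = ∑ j ∈ T₂, counit (R := K) (b j) • rcontr (b.coord j) C (comul (R := K) y) := by
      have happ := congrArg (fun t => (TensorProduct.rid K C)
        ((LinearMap.lTensor C (counit (R := K))) t)) hs₂
      simpa [Coalgebra.lTensor_counit_comul (R := K) y, map_sum] using happ.symm
    rw [hy']
    exact Submodule.sum_mem _ fun j _ => Submodule.smul_mem _ _ (hy j)
  have hcD : c ∈ D := by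
    have hc' : c = ∑ i ∈ T, counit (R := K) (b i) • lcontr (b.coord i) C (comul (R := K) c) := by
      have happ := congrArg (fun t => (TensorProduct.lid K C)
        ((LinearMap.rTensor C (counit (R := K))) t)) hTsum
      simpa [Coalgebra.rTensor_counit_comul (R := K) c, map_sum] using happ.symm
    rw [hc']
    exact Submodule.sum_mem _ fun i _ =>
      Submodule.smul_mem _ _ (step1 (Rm b i c) fun j => hgen i j)
  -- subcoalgebra
  have hsubco : IsSubcoalgebra D := by
    intro x hx
    induction hx using Submodule.span_induction with
    | mem g hg =>
      obtain ⟨⟨i, j⟩, rfl⟩ := hg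
      have hcg : comul (R := K) (f (i, j)) =
          LinearMap.lTensor C (Lm b j) (LinearMap.rTensor C (Rm b i) (comul (R := K) c)) := by
        rw [hf]
        simp only
        rw [comul_Lm, comul_Rm]
      refine mem_range_map_of_mem_inter D ?_ ?_
      · -- in C ⊗ D
        rw [hcg, ← hTsum]
        rw [map_sum, map_sum]
        refine Submodule.sum_mem _ fun i' _ => ?_
        rw [LinearMap.rTensor_tmul, LinearMap.lTensor_tmul]
        exact ⟨Rm b i (b i') ⊗ₜ[K] ⟨Lm b j (Rm b i' c), hgen i' j⟩, by simp⟩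
      · -- in D ⊗ C
        obtain ⟨T₂, hz₂, hs₂⟩ := repr_right b (comul (R := K) c)
        rw [hcg, ← hs₂, map_sum, map_sum]
        refine Submodule.sum_mem _ fun j' _ => ?_
        rw [LinearMap.rTensor_tmul, LinearMap.lTensor_tmul]
        have hmem : Rm b i (rcontr (b.coord j') C (comul (R := K) c)) ∈ D := by
          have : Rm b i (Lm b j' c) = Lm b j' (Rm b i c) := (Lm_Rm_comm b i j' c).symm
          rw [show rcontr (b.coord j') C (comul (R := K) c) = Lm b j' c from rfl, this]
          exact hgen i j'
        exact ⟨(⟨_, hmem⟩ : D) ⊗ₜ[K] Lm b j (b j'), by simp⟩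
    | zero => simp only [map_zero]; exact Submodule.zero_mem _
    | add y z _ _ hy hz => rw [map_add]; exact Submodule.add_mem _ hy hz
    | smul k y _ hy => rw [map_smul]; exact Submodule.smul_mem _ _ hy
  exact ⟨D, hcD, hsubco, hFD⟩

lemma isSubcoalgebra_bot : IsSubcoalgebra (⊥ : Submodule K C) := by
  intro x hx
  rw [Submodule.mem_bot] at hx
  subst hx
  simp only [map_zero]
  exact Submodule.zero_mem _

lemma isSubcoalgebra_sup {D₁ D₂ : Submodule K C} (h₁ : IsSubcoalgebra D₁)
    (h₂ : IsSubcoalgebra D₂) : IsSubcoalgebra (D₁ ⊔ D₂) := by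
  intro x hx
  rw [Submodule.mem_sup] at hx
  obtain ⟨y, hy, z, hz, rfl⟩ := hx
  rw [map_add]
  exact Submodule.add_mem _
    (range_map_subtype_mono le_sup_left (h₁ y hy))
    (range_map_subtype_mono le_sup_right (h₂ z hz))

/-- The fundamental theorem of coalgebras, finite-set version. -/
theorem exists_fd_subcoalgebra_set (F : Set C) (hF : F.Finite) :
    ∃ E : Submodule K C, F ⊆ E ∧ IsSubcoalgebra E ∧ FiniteDimensional K E := by
  have h0 : ∃ E : Submodule K C, (∅ : Set C) ⊆ E ∧ IsSubcoalgebra E ∧ FiniteDimensional K E :=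
    ⟨⊥, Set.empty_subset _, isSubcoalgebra_bot, inferInstance⟩
  have h1 : ∀ (a : C) (s : Set C),
      (∃ E : Submodule K C, s ⊆ E ∧ IsSubcoalgebra E ∧ FiniteDimensional K E) →
      ∃ E : Submodule K C, insert a s ⊆ E ∧ IsSubcoalgebra E ∧ FiniteDimensional K E := by
    rintro a s ⟨E₁, hs, hsc₁, hfd₁⟩
    obtain ⟨E₂, ha, hsc₂, hfd₂⟩ := exists_fd_subcoalgebra (K := K) a
    refine ⟨E₁ ⊔ E₂, ?_, isSubcoalgebra_sup (K := K) hsc₁ hsc₂, ?_⟩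
    · refine Set.insert_subset ((le_sup_right : E₂ ≤ E₁ ⊔ E₂) ha) (hs.trans ?_)
      exact fun x hx => (le_sup_left : E₁ ≤ E₁ ⊔ E₂) hx
    · exact Submodule.finiteDimensional_sup E₁ E₂
  exact Set.Finite.induction_on
    (motive := fun (s : Set C) _ => ∃ E : Submodule K C, s ⊆ E ∧ IsSubcoalgebra E ∧ FiniteDimensional K E)
    F hF h0 (fun {a s} _ _ ih => h1 a s ih)

end ModCoalgAux

/-- **Finiteness for module coalgebras** (Section 4).
Let `H` be a bialgebra over a field `K` and `C` a left `H`-module coalgebra.  If `E` is a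
finite-dimensional subcoalgebra of `C`, then `D = H·E`, the left `H`-submodule generated
by `E`, is simultaneously an `H`-submodule and a subcoalgebra of `C`, and it is finitely
generated as a left `H`-module.  Consequently every finite subset of `C` is contained in
an `H`-submodule subcoalgebra of `C` which is finitely generated as a left `H`-module. -/
theorem module_coalgebra_finiteness
    (K : Type*) [Field K] (H : Type*) [Ring H] [Bialgebra K H]
    (C : Type*) [AddCommGroup C] [Module K C] [Coalgebra K C]
    [Module H C] [IsScalarTower K H C] [SMulCommClass K H C]
    -- module-coalgebra axiom: Δ_C(h·c) = Σ (h₁·c₍₁₎) ⊗ (h₂·c₍₂₎)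
    (hcompat : ∀ (h : H) (c : C),
        Coalgebra.comul (R := K) (h • c) =
        (TensorProduct.map (actionMap K H C) (actionMap K H C))
          ((TensorProduct.tensorTensorTensorComm K H H C C)
            ((Coalgebra.comul (R := K) h) ⊗ₜ[K] (Coalgebra.comul (R := K) c))))
    -- module-coalgebra counit axiom: ε_C(h·c) = ε_H(h) ε_C(c)
    (hcompat' : ∀ (h : H) (c : C),
        Coalgebra.counit (R := K) (h • c) =
        Coalgebra.counit (R := K) h * Coalgebra.counit (R := K) c) :
    (∀ E : Submodule K C, IsSubcoalgebra E → FiniteDimensional K E →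
      IsSubcoalgebra ((Submodule.span H (E : Set C)).restrictScalars K) ∧
      (Submodule.span H (E : Set C)).FG) ∧
    (∀ F : Set C, F.Finite → ∃ D : Submodule H C, F ⊆ D ∧
      IsSubcoalgebra (D.restrictScalars K) ∧ D.FG) := by
  have part1 : ∀ E : Submodule K C, IsSubcoalgebra E → FiniteDimensional K E →
      IsSubcoalgebra ((Submodule.span H (E : Set C)).restrictScalars K) ∧
      (Submodule.span H (E : Set C)).FG := by
    intro E hE hfd
    set D' : Submodule K C := (Submodule.span H (E : Set C)).restrictScalars K with hD'
    have hED' : E ≤ D' := fun x hx => Submodule.subset_span hx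
    constructor
    · -- subcoalgebra
      have act_tmul : ∀ (h : H) (c : C), actionMap K H C (h ⊗ₜ[K] c) = h • c := fun _ _ => rfl
      have key : ∀ (s : H ⊗[K] H) (t : D' ⊗[K] D'),
          (TensorProduct.map (actionMap K H C) (actionMap K H C))
            ((TensorProduct.tensorTensorTensorComm K H H C C)
              (s ⊗ₜ[K] (TensorProduct.map D'.subtype D'.subtype t))) ∈
          LinearMap.range (TensorProduct.map D'.subtype D'.subtype) := by
        intro s t
        induction s using TensorProduct.induction_on with
        | zero => rw [zero_tmul, map_zero, map_zero]; exact Submodule.zero_mem _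
        | tmul h₁ h₂ =>
          induction t using TensorProduct.induction_on with
          | zero => rw [map_zero, tmul_zero, map_zero, map_zero]; exact Submodule.zero_mem _
          | tmul d d' =>
            rw [TensorProduct.map_tmul, tensorTensorTensorComm_tmul, TensorProduct.map_tmul,
              act_tmul, act_tmul]
            have hd : h₁ • (D'.subtype d) ∈ Submodule.span H (E : Set C) :=
              Submodule.smul_mem _ h₁ d.2
            have hd' : h₂ • (D'.subtype d') ∈ Submodule.span H (E : Set C) :=
              Submodule.smul_mem _ h₂ d'.2
            exact ⟨(⟨_, hd⟩ : D') ⊗ₜ[K] (⟨_, hd'⟩ : D'), by simp⟩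
          | add t₁ t₂ ih₁ ih₂ =>
            rw [map_add, tmul_add, map_add, map_add]
            exact Submodule.add_mem _ ih₁ ih₂
        | add s₁ s₂ ih₁ ih₂ =>
          rw [add_tmul, map_add, map_add]
          exact Submodule.add_mem _ ih₁ ih₂
      intro x hx
      have hx' : x ∈ Submodule.span H (E : Set C) := hx
      clear hx
      induction hx' using Submodule.span_induction with
      | mem g hg => exact ModCoalgAux.range_map_subtype_mono (K := K) hED' (hE g hg)
      | zero => rw [map_zero]; exact Submodule.zero_mem _
      | add y z _ _ hy hz => rw [map_add]; exact Submodule.add_mem _ hy hz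
      | smul h y _ hy =>
        obtain ⟨t, ht⟩ := hy
        rw [hcompat h y, ← ht]
        exact key (Coalgebra.comul (R := K) h) t
    · -- finitely generated
      obtain ⟨S, hS⟩ := (Submodule.fg_iff_finiteDimensional E).mpr hfd
      refine ⟨S, le_antisymm (Submodule.span_mono ?_) ?_⟩
      · intro x hx
        rw [← hS]
        exact Submodule.subset_span hx
      · rw [Submodule.span_le]
        intro x hx
        have hx2 : x ∈ Submodule.span K (S : Set C) := by rw [hS]; exact hx
        exact Submodule.span_le_restrictScalars K H (S : Set C) hx2
  refine ⟨part1, ?_⟩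
  intro F hF
  obtain ⟨E, hFE, hE, hfd⟩ := ModCoalgAux.exists_fd_subcoalgebra_set (K := K) F hF
  obtain ⟨hsub, hfg⟩ := part1 E hE hfd
  exact ⟨Submodule.span H (E : Set C), fun x hx => Submodule.subset_span (hFE hx), hsub, hfg⟩
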